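/- Fix s > 0, c ∈ [0,1), ω ≥ 0, ζ ≥ 0, η ≥ 0, ν ∈ (0,1], and α > 0 with α ≠ ν, and set a = s(1−c) + ω². For λ > 0 define X(λ) = sqrt((aα − aν + λν)² + 4aλν²), q̂(λ) = (X(λ) + aα − (a + λ)ν)/(2aλ), S(λ) = q̂(λ)/(ν + a·q̂(λ)), γ(λ) = a²νS(λ)²/α, I⁰(λ) = s(1−c)·(1 − 2s(1−c)νS(λ) + a s(1−c) ν S(λ)²), and E⁰(λ) = (I⁰(λ) + γ(λ)ζ² + η²)/(1 − γ(λ)). Then as λ → 0⁺, E⁰(λ) converges to: (s(1−c)·ν/(ν−α))·(1 + s(1−c)α(α − 2ν)/(ν·a)) + (αζ² + νη²)/(ν − α) if α < ν, and (s(1−c)·α/(α−ν))·(1 − s(1−c)ν/a) + (νζ² + αη²)/(α − ν) if α > ν. -/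

import Mathlib

/-- Conjugate order parameter of the replica saddle-point equations. -/
noncomputable def qhatFun (a α ν lam : ℝ) : ℝ :=
  (Real.sqrt ((a * α - a * ν + lam * ν) ^ 2 + 4 * a * lam * ν ^ 2)
      + a * α - (a + lam) * ν) / (2 * a * lam)

/-- Reduced resolvent factor `S(λ) = q̂(λ)/(ν + a·q̂(λ))`. -/
noncomputable def Sfun (a α ν lam : ℝ) : ℝ :=
  qhatFun a α ν lam / (ν + a * qhatFun a α ν lam)

/-- Overlap parameter `γ(λ) = a²νS(λ)²/α`. -/
noncomputable def gammaFun (a α ν lam : ℝ) : ℝ :=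
  a ^ 2 * ν * Sfun a α ν lam ^ 2 / α

lemma Sfun_eq {a ν α : ℝ} (ha : 0 < a) (hν : 0 < ν) {lam : ℝ} (hlam : 0 < lam) :
    Sfun a α ν lam = 1/a -
      (Real.sqrt ((a*α - a*ν + lam*ν)^2 + 4*a*lam*ν^2) - (a*α - a*ν + lam*ν))/(2*a^2*ν) := by
  set u := a*α - a*ν + lam*ν with hu
  set X := Real.sqrt (u^2 + 4*a*lam*ν^2) with hX
  have h4 : 0 < 4*a*lam*ν^2 := by positivity
  have hX2 : X^2 = u^2 + 4*a*lam*ν^2 := Real.sq_sqrt (by positivity)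
  have hXgt : |u| < X := by
    rw [hX, ← Real.sqrt_sq_eq_abs]
    exact Real.sqrt_lt_sqrt (by positivity) (by linarith)
  have hXu : u < X := lt_of_le_of_lt (le_abs_self u) hXgt
  have hXu' : 0 < X + u := by have := neg_abs_le u; linarith
  have hq : qhatFun a α ν lam = (X + u - 2*lam*ν)/(2*a*lam) := by
    rw [qhatFun, ← hu, ← hX, hu]; ring
  have hne : ν + a*((X + u - 2*lam*ν)/(2*a*lam)) ≠ 0 := by
    have h : ν + a*((X + u - 2*lam*ν)/(2*a*lam)) = (X+u)/(2*lam) := by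
      field_simp; ring
    rw [h]; positivity
  rw [Sfun, hq]
  rw [div_eq_iff hne]
  field_simp
  have hX2' : X^2 = (a*α - a*ν + lam*ν)^2 + 4*a*lam*ν^2 := by rw [hX2, hu]
  linear_combination hX2'

lemma Sfun_tendsto {a ν α : ℝ} (ha : 0 < a) (hν : 0 < ν) (hα : 0 < α) :
    Filter.Tendsto (Sfun a α ν) (nhdsWithin 0 (Set.Ioi 0))
      (nhds (1/a - (|a*α - a*ν| - (a*α - a*ν))/(2*a^2*ν))) := by
  have hcont : Continuous (fun lam : ℝ =>
      1/a - (Real.sqrt ((a*α - a*ν + lam*ν)^2 + 4*a*lam*ν^2) - (a*α - a*ν + lam*ν))/(2*a^2*ν)) := by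
    fun_prop
  have h0 : Filter.Tendsto (fun lam : ℝ =>
      1/a - (Real.sqrt ((a*α - a*ν + lam*ν)^2 + 4*a*lam*ν^2) - (a*α - a*ν + lam*ν))/(2*a^2*ν))
      (nhdsWithin 0 (Set.Ioi 0))
      (nhds (1/a - (|a*α - a*ν| - (a*α - a*ν))/(2*a^2*ν))) := by
    have := (hcont.tendsto 0).mono_left (nhdsWithin_le_nhds (s := Set.Ioi 0))
    simpa [Real.sqrt_sq_eq_abs] using this
  refine h0.congr' ?_
  filter_upwards [self_mem_nhdsWithin] with lam hlam
  exact (Sfun_eq ha hν hlam).symm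

lemma comp_aux (s c ζ η : ℝ) {a ν α S₀ : ℝ}
    (hS : Filter.Tendsto (Sfun a α ν) (nhdsWithin 0 (Set.Ioi 0)) (nhds S₀))
    (hne : 1 - a^2*ν*S₀^2/α ≠ 0) :
    Filter.Tendsto
      (fun lam : ℝ =>
        (s * (1 - c) * (1 - 2 * s * (1 - c) * ν * Sfun a α ν lam
              + a * s * (1 - c) * ν * Sfun a α ν lam ^ 2)
            + gammaFun a α ν lam * ζ ^ 2 + η ^ 2) / (1 - gammaFun a α ν lam))
      (nhdsWithin 0 (Set.Ioi 0))
      (nhds ((s * (1 - c) * (1 - 2 * s * (1 - c) * ν * S₀ + a * s * (1 - c) * ν * S₀ ^ 2)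
            + a^2*ν*S₀^2/α * ζ ^ 2 + η ^ 2) / (1 - a^2*ν*S₀^2/α))) := by
  have hγ : Filter.Tendsto (fun lam => gammaFun a α ν lam) (nhdsWithin 0 (Set.Ioi 0))
      (nhds (a^2*ν*S₀^2/α)) := by
    simp only [gammaFun]
    exact ((hS.pow 2).const_mul (a^2*ν)).div_const α
  have hnum : Filter.Tendsto
      (fun lam : ℝ => s * (1 - c) * (1 - 2 * s * (1 - c) * ν * Sfun a α ν lam
              + a * s * (1 - c) * ν * Sfun a α ν lam ^ 2)
            + gammaFun a α ν lam * ζ ^ 2 + η ^ 2)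
      (nhdsWithin 0 (Set.Ioi 0))
      (nhds (s * (1 - c) * (1 - 2 * s * (1 - c) * ν * S₀ + a * s * (1 - c) * ν * S₀ ^ 2)
            + a^2*ν*S₀^2/α * ζ ^ 2 + η ^ 2)) := by
    exact ((tendsto_const_nhds.mul ((tendsto_const_nhds.sub
      (hS.const_mul (2*s*(1-c)*ν))).add ((hS.pow 2).const_mul (a*s*(1-c)*ν)))).add
      (hγ.mul_const (ζ^2))).add tendsto_const_nhds
  exact hnum.div (tendsto_const_nhds.sub hγ) hne

/-- Ridgeless limit of the `ρ = 0` component of the diagonal generalization error of a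
single feature-subsampling ridge predictor on equicorrelated data. -/
theorem stmt_10 (s c ω ζ η ν α : ℝ) (hs : 0 < s) (hc : c ∈ Set.Ico (0 : ℝ) 1)
    (hω : 0 ≤ ω) (hζ : 0 ≤ ζ) (hη : 0 ≤ η) (hν : ν ∈ Set.Ioc (0 : ℝ) 1)
    (hα : 0 < α) (hαν : α ≠ ν) :
    let a := s * (1 - c) + ω ^ 2
    Filter.Tendsto
      (fun lam : ℝ =>
        (s * (1 - c) * (1 - 2 * s * (1 - c) * ν * Sfun a α ν lam
              + a * s * (1 - c) * ν * Sfun a α ν lam ^ 2)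
            + gammaFun a α ν lam * ζ ^ 2 + η ^ 2) / (1 - gammaFun a α ν lam))
      (nhdsWithin 0 (Set.Ioi 0))
      (nhds (if α < ν then
          (s * (1 - c) * ν / (ν - α)) * (1 + s * (1 - c) * α * (α - 2 * ν) / (ν * a))
            + (α * ζ ^ 2 + ν * η ^ 2) / (ν - α)
        else
          (s * (1 - c) * α / (α - ν)) * (1 - s * (1 - c) * ν / a)
            + (ν * ζ ^ 2 + α * η ^ 2) / (α - ν))) := by
  intro a
  have h1c : (0:ℝ) < 1 - c := by linarith [hc.2]
  have hb : 0 < s * (1 - c) := mul_pos hs h1c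
  have ha : 0 < a := by
    have hdef : a = s * (1 - c) + ω ^ 2 := rfl
    nlinarith [sq_nonneg ω]
  have hν0 : 0 < ν := hν.1
  have hST := Sfun_tendsto (α := α) ha hν0 hα
  rcases hαν.lt_or_gt with h | h
  · -- α < ν
    rw [if_pos h]
    have habs : |a*α - a*ν| = a*ν - a*α := by
      rw [abs_of_neg (by nlinarith)]; ring
    have hS0 : 1/a - (|a*α - a*ν| - (a*α - a*ν))/(2*a^2*ν) = α/(a*ν) := by
      rw [habs]; field_simp; ring
    rw [hS0] at hST
    have hγeq : 1 - a^2*ν*(α/(a*ν))^2/α = (ν-α)/ν := by field_simp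
    have hγ0 : 1 - a^2*ν*(α/(a*ν))^2/α ≠ 0 := by
      rw [hγeq]; exact div_ne_zero (by linarith) hν0.ne'
    have hT := comp_aux s c ζ η hST hγ0
    have hval : (s * (1 - c) * (1 - 2 * s * (1 - c) * ν * (α/(a*ν))
            + a * s * (1 - c) * ν * (α/(a*ν)) ^ 2)
          + a^2*ν*(α/(a*ν))^2/α * ζ ^ 2 + η ^ 2) / (1 - a^2*ν*(α/(a*ν))^2/α)
        = (s * (1 - c) * ν / (ν - α)) * (1 + s * (1 - c) * α * (α - 2 * ν) / (ν * a))
            + (α * ζ ^ 2 + ν * η ^ 2) / (ν - α) := by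
      have hνα : ν - α ≠ 0 := by linarith
      rw [hγeq]
      field_simp
      ring
    rw [← hval]
    exact hT
  · -- ν < α
    rw [if_neg (not_lt.2 h.le)]
    have habs : |a*α - a*ν| = a*α - a*ν := by
      rw [abs_of_pos (by nlinarith)]
    have hS0 : 1/a - (|a*α - a*ν| - (a*α - a*ν))/(2*a^2*ν) = 1/a := by
      rw [habs]; simp
    rw [hS0] at hST
    have hγeq : 1 - a^2*ν*(1/a)^2/α = (α-ν)/α := by field_simp
    have hγ0 : 1 - a^2*ν*(1/a)^2/α ≠ 0 := by
      rw [hγeq]; exact div_ne_zero (by linarith) hα.ne'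
    have hT := comp_aux s c ζ η hST hγ0
    have hval : (s * (1 - c) * (1 - 2 * s * (1 - c) * ν * (1/a)
            + a * s * (1 - c) * ν * (1/a) ^ 2)
          + a^2*ν*(1/a)^2/α * ζ ^ 2 + η ^ 2) / (1 - a^2*ν*(1/a)^2/α)
        = (s * (1 - c) * α / (α - ν)) * (1 - s * (1 - c) * ν / a)
            + (ν * ζ ^ 2 + α * η ^ 2) / (α - ν) := by
      have hαν' : α - ν ≠ 0 := by linarith
      rw [hγeq]
      field_simp
      ring
    rw [← hval]
    exact hT
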